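/- Let 0 < α < n, 0 < p ≤ 1, N = ⌊n(1/p−1)⌋ + 1, and let a be a (p,∞,N−1)-atom supported in the discrete cube Q_{k⁰,m}. Let Φ ∈ S(ℝⁿ) with supp(Φ) ⊂ B_{1/4}(0). Then for all j ∈ ℤⁿ with |j−k⁰|_∞ > 4⌊√n⌋m and all 1 ≤ t ≤ 2|j−k⁰|_∞, |(Φ_t^d ∗ I_α a)(j)| ≤ C (#Q_{k⁰,m})^{−1/p} (2m+1)^{n+N} |j−k⁰|_∞^{α−n−N}, with C independent of a, j, t, k⁰, m. -/

import Mathlib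

open scoped BigOperators ENNReal

noncomputable section

/-- Euclidean norm of an integer vector in `ℤⁿ`. -/
def znorm {n : ℕ} (j : Fin n → ℤ) : ℝ := Real.sqrt (∑ l, ((j l : ℝ)) ^ 2)

/-- `ℓ^∞` norm of an integer vector, as a natural number. -/
def zinf {n : ℕ} (j : Fin n → ℤ) : ℕ := Finset.univ.sup fun l => (j l).natAbs

/-- The discrete cube centered at `k0` with "radius" `m` (side length `2m+1`),
i.e. `{i : |i - k0|_∞ ≤ m}`. -/
def dcube {n : ℕ} (k0 : Fin n → ℤ) (m : ℕ) : Finset (Fin n → ℤ) :=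
  Finset.Icc (fun l => k0 l - m) (fun l => k0 l + m)

/-- The discrete Riesz potential `(I_α b)(j) = ∑_{i ≠ j} b(i) |i-j|^{α-n}`. -/
def rieszPot {n : ℕ} (α : ℝ) (b : (Fin n → ℤ) → ℝ) (j : Fin n → ℤ) : ℝ :=
  ∑' i : {i : Fin n → ℤ // i ≠ j}, b i.1 * znorm (i.1 - j) ^ (α - n)

/-- Embedding of `ℤⁿ` into Euclidean space `ℝⁿ`. -/
def toE {n : ℕ} (j : Fin n → ℤ) : EuclideanSpace ℝ (Fin n) := WithLp.toLp 2 (fun l => (j l : ℝ))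

/-- The discretized dilation `Φ_t^d(j) = t^{-n} Φ(j/t)` for `j ≠ 0`, and `Φ_t^d(0) = 0`. -/
def phid {n : ℕ} (Φ : SchwartzMap (EuclideanSpace ℝ (Fin n)) ℝ) (t : ℝ) (j : Fin n → ℤ) : ℝ :=
  if j = 0 then 0 else t ^ (-(n : ℝ)) * Φ (t⁻¹ • toE j)

/-- Discrete convolution `(b ∗ c)(j) = ∑_i b(i) c(j-i)`. -/
def dconv {n : ℕ} (b c : (Fin n → ℤ) → ℝ) (j : Fin n → ℤ) : ℝ :=
  ∑' i : Fin n → ℤ, b i * c (j - i)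

/-- The maximal function `sup_{t>0} |(Φ_t^d ∗ b)(j)|`, valued in `ℝ≥0∞`. -/
def maxFn {n : ℕ} (Φ : SchwartzMap (EuclideanSpace ℝ (Fin n)) ℝ) (b : (Fin n → ℤ) → ℝ)
    (j : Fin n → ℤ) : ℝ≥0∞ :=
  ⨆ (t : ℝ) (_ : 0 < t), ENNReal.ofReal |dconv (phid Φ t) b j|

/-- The `ℓ^p` quasinorm (`0 < p < ∞`) of a real sequence on `ℤⁿ`, valued in `ℝ≥0∞`. -/
def elp {n : ℕ} (p : ℝ) (f : (Fin n → ℤ) → ℝ) : ℝ≥0∞ :=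
  (∑' j : Fin n → ℤ, ENNReal.ofReal |f j| ^ p) ^ (1 / p)

/-- The `ℓ^p` quasinorm of an `ℝ≥0∞`-valued sequence on `ℤⁿ`. -/
def elpE {n : ℕ} (p : ℝ) (f : (Fin n → ℤ) → ℝ≥0∞) : ℝ≥0∞ :=
  (∑' j : Fin n → ℤ, f j ^ p) ^ (1 / p)

/-- The discrete Hardy space quasinorm `‖b‖_{H^p} = ‖b‖_{ℓ^p} + ‖sup_{t>0}|Φ_t^d ∗ b|‖_{ℓ^p}`. -/
def hpNorm {n : ℕ} (Φ : SchwartzMap (EuclideanSpace ℝ (Fin n)) ℝ) (p : ℝ)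
    (b : (Fin n → ℤ) → ℝ) : ℝ≥0∞ :=
  elp p b + elpE p (maxFn Φ b)

/-- A `(p, ∞, N)`-atom supported in the discrete cube `dcube k0 m`. -/
def IsDiscreteAtom {n : ℕ} (p : ℝ) (N : ℕ) (k0 : Fin n → ℤ) (m : ℕ)
    (a : (Fin n → ℤ) → ℝ) : Prop :=
  (∀ j, j ∉ dcube k0 m → a j = 0) ∧
  (∀ j, |a j| ≤ ((dcube k0 m).card : ℝ) ^ (-(1 / p))) ∧
  (∀ β : Fin n → ℕ, (∑ l, β l) ≤ N →
    ∑ j ∈ dcube k0 m, (∏ l, ((j l : ℝ)) ^ β l) * a j = 0)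

/-- The centered discrete fractional maximal operator
`(M_α b)(j) = sup_m (#Q_{j,m})^{α/n - 1} ∑_{i ∈ Q_{j,m}} |b(i)|`. -/
def fracMax {n : ℕ} (α : ℝ) (b : (Fin n → ℤ) → ℝ) (j : Fin n → ℤ) : ℝ≥0∞ :=
  ⨆ m : ℕ, ENNReal.ofReal
    ((((dcube j m).card : ℝ) ^ (α / n - 1)) * ∑ i ∈ dcube j m, |b i|)

/-- The Taylor polynomial of degree `N - 1` of `f` centered at `c`, evaluated at `x`. -/
def taylorPoly {n : ℕ} (f : EuclideanSpace ℝ (Fin n) → ℝ) (c x : EuclideanSpace ℝ (Fin n))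
    (N : ℕ) : ℝ :=
  ∑ r ∈ Finset.range N, (1 / r.factorial : ℝ) * iteratedFDeriv ℝ r f c (fun _ => x - c)

section helpers
variable {n : ℕ}

lemma toE_sub (u v : Fin n → ℤ) : toE (u - v) = toE u - toE v := by
  ext l; simp [toE]

lemma znorm_eq (v : Fin n → ℤ) : znorm v = ‖toE v‖ := by
  rw [znorm, EuclideanSpace.norm_eq]
  congr 1; apply Finset.sum_congr rfl; intro l _
  simp [toE, Real.norm_eq_abs, sq_abs]

lemma abs_coord_le_norm (x : EuclideanSpace ℝ (Fin n)) (l : Fin n) :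
    |x l| ≤ ‖x‖ := by
  rw [EuclideanSpace.norm_eq, ← Real.sqrt_sq_eq_abs]
  apply Real.sqrt_le_sqrt
  calc (x l)^2 = ‖x l‖^2 := by simp [Real.norm_eq_abs, sq_abs]
  _ ≤ ∑ i, ‖x i‖^2 := Finset.single_le_sum (f := fun i => ‖x i‖^2)
        (fun i _ => by positivity) (Finset.mem_univ l)

lemma natAbs_le_zinf (v : Fin n → ℤ) (l : Fin n) : (v l).natAbs ≤ zinf v :=
  Finset.le_sup (f := fun l => (v l).natAbs) (Finset.mem_univ l)

lemma exists_coord_zinf (hn : 0 < n) (v : Fin n → ℤ) :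
    ∃ l, zinf v = (v l).natAbs := by
  obtain ⟨l, _, h⟩ := Finset.exists_mem_eq_sup Finset.univ
    (Finset.univ_nonempty_iff.2 (by exact Fin.pos_iff_nonempty.1 hn)) (fun l => (v l).natAbs)
  exact ⟨l, h⟩

lemma zinf_coe_le_norm (hn : 0 < n) (v : Fin n → ℤ) : (zinf v : ℝ) ≤ ‖toE v‖ := by
  obtain ⟨l, hl⟩ := exists_coord_zinf hn v
  rw [hl]
  calc ((v l).natAbs : ℝ) = |((v l : ℝ))| := by
        rw [Nat.cast_natAbs]; push_cast; ring_nf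
  _ = |toE v l| := rfl
  _ ≤ ‖toE v‖ := abs_coord_le_norm _ _

lemma zinf_add_le (u v : Fin n → ℤ) : zinf (u + v) ≤ zinf u + zinf v := by
  apply Finset.sup_le; intro l _
  calc ((u + v) l).natAbs = (u l + v l).natAbs := rfl
  _ ≤ (u l).natAbs + (v l).natAbs := Int.natAbs_add_le _ _
  _ ≤ _ := add_le_add (natAbs_le_zinf u l) (natAbs_le_zinf v l)

lemma mem_dcube {k0 : Fin n → ℤ} {m : ℕ} {i : Fin n → ℤ} :
    i ∈ dcube k0 m ↔ ∀ l, (i l - k0 l).natAbs ≤ m := by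
  simp only [dcube, Finset.mem_Icc, Pi.le_def]
  constructor
  · rintro ⟨h1, h2⟩ l
    have := h1 l; have := h2 l; omega
  · intro h
    refine ⟨fun l => ?_, fun l => ?_⟩ <;> (have := h l; omega)

lemma mem_dcube_zinf {k0 : Fin n → ℤ} {m : ℕ} {i : Fin n → ℤ} :
    i ∈ dcube k0 m ↔ zinf (i - k0) ≤ m := by
  rw [mem_dcube, zinf]
  constructor
  · intro h; exact Finset.sup_le fun l _ => h l
  · intro h l
    exact le_trans (Finset.le_sup (f := fun l => ((i - k0) l).natAbs) (Finset.mem_univ l)) h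

lemma card_dcube (k0 : Fin n → ℤ) (m : ℕ) : (dcube k0 m).card = (2 * m + 1) ^ n := by
  rw [dcube, Pi.card_Icc]
  have : ∀ l : Fin n, (Finset.Icc (k0 l - m) (k0 l + m)).card = 2 * m + 1 := by
    intro l; rw [Int.card_Icc]; omega
  simp [this, Finset.prod_const]

lemma norm_toE_sub_le {k0 : Fin n → ℤ} {m : ℕ} {i : Fin n → ℤ} (hi : i ∈ dcube k0 m) :
    ‖toE i - toE k0‖ ≤ Real.sqrt n * m := by
  rw [← toE_sub, ← znorm_eq, znorm]
  have h1 : ∑ l, (((i - k0) l : ℝ)) ^ 2 ≤ n * (m:ℝ)^2 := by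
    calc ∑ l, (((i - k0) l : ℝ)) ^ 2 ≤ ∑ _l : Fin n, (m:ℝ)^2 := by
          apply Finset.sum_le_sum; intro l _
          have h := mem_dcube.1 hi l
          have habs : |i l - k0 l| ≤ (m:ℤ) := by
            rw [Int.abs_eq_natAbs]; exact_mod_cast h
          have : |((i l - k0 l : ℤ) : ℝ)| ≤ (m:ℝ) := by
            rw [← Int.cast_abs]; exact_mod_cast habs
          calc (((i - k0) l : ℝ))^2 = |((i l - k0 l : ℤ) : ℝ)|^2 := by
                rw [sq_abs]; norm_num [Pi.sub_apply]
          _ ≤ (m:ℝ)^2 := by nlinarith [abs_nonneg ((i l - k0 l : ℤ) : ℝ)]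
    _ = n * (m:ℝ)^2 := by simp [Finset.sum_const, mul_comm]
  calc Real.sqrt (∑ l, (((i - k0) l : ℝ)) ^ 2) ≤ Real.sqrt (n * (m:ℝ)^2) :=
        Real.sqrt_le_sqrt h1
  _ = Real.sqrt n * m := by
        rw [Real.sqrt_mul (by positivity), Real.sqrt_sq (by positivity)]

end helpers
section shift
variable {E' : Type*} [NormedAddCommGroup E'] [NormedSpace ℝ E']
  {F' : Type*} [NormedAddCommGroup F'] [NormedSpace ℝ F']

lemma fderiv_comp_add_right' (g : E' → F') (v x : E') :
    fderiv ℝ (fun z => g (z + v)) x = fderiv ℝ g (x + v) := by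
  by_cases h : DifferentiableAt ℝ g (x + v)
  · have h1 : HasFDerivAt (fun z => g (z + v)) (fderiv ℝ g (x + v)) x := by
      have := h.hasFDerivAt.comp x ((hasFDerivAt_id x).add_const v)
      simpa [Function.comp_def] using this
    exact h1.fderiv
  · have h2 : ¬ DifferentiableAt ℝ (fun z => g (z + v)) x := by
      intro hc
      apply h
      have hsub : DifferentiableAt ℝ (fun z : E' => z - v) (x + v) :=
        (differentiable_id.sub_const v).differentiableAt
      have : DifferentiableAt ℝ (fun z => g (z + v)) ((fun z : E' => z - v) (x + v)) := by
        simpa using hc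
      have := this.comp (x + v) hsub
      have heq : (fun z => (fun w => g (w + v)) (z - v)) = g := by
        funext z; simp
      rw [Function.comp_def, heq] at this
      simpa using this
    rw [fderiv_zero_of_not_differentiableAt h, fderiv_zero_of_not_differentiableAt h2]

lemma iteratedFDeriv_comp_add_right'' (g : E' → F') (v : E') (N : ℕ) :
    ∀ x, iteratedFDeriv ℝ N (fun z => g (z + v)) x = iteratedFDeriv ℝ N g (x + v) := by
  induction N with
  | zero => intro x; ext m; simp
  | succ N IH =>
    intro x
    ext m
    rw [iteratedFDeriv_succ_apply_left, iteratedFDeriv_succ_apply_left]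
    have hfun : (iteratedFDeriv ℝ N (fun z => g (z + v))) =
        (fun z => iteratedFDeriv ℝ N g (z + v)) := funext IH
    rw [hfun, fderiv_comp_add_right' (iteratedFDeriv ℝ N g) v x]

end shift

section taylor1d

lemma taylor1d (K : ℝ) : ∀ (k : ℕ) (ψ : ℕ → ℝ → ℝ),
    (∀ r < k, ∀ s ∈ Set.Icc (0:ℝ) 1, HasDerivAt (ψ r) (ψ (r+1) s) s) →
    (∀ s ∈ Set.Icc (0:ℝ) 1, |ψ k s| ≤ K) →
    ∀ s ∈ Set.Icc (0:ℝ) 1, |ψ 0 s - ∑ r ∈ Finset.range k, ψ r 0 * s ^ r / r.factorial| ≤ K := by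
  intro k
  induction k with
  | zero =>
    intro ψ _ hK s hs
    simpa using hK s hs
  | succ k IH =>
    intro ψ hd hK s hs
    have hK0 : 0 ≤ K := le_trans (abs_nonneg _) (hK 0 (by norm_num))
    -- the inner derivative estimate from IH applied to shifted family
    have hIH := IH (fun r => ψ (r+1))
      (fun r hr s hs => hd (r+1) (by omega) s hs)
      (fun s hs => hK s hs)
    set F : ℝ → ℝ := fun s => ψ 0 s - ∑ r ∈ Finset.range (k+1), ψ r 0 * s ^ r / r.factorial
      with hF
    set G : ℝ → ℝ := fun s => ψ 1 s - ∑ r ∈ Finset.range k, ψ (r+1) 0 * s ^ r / r.factorial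
      with hG
    have hderiv : ∀ u ∈ Set.Icc (0:ℝ) 1, HasDerivAt F (G u) u := by
      intro u hu
      have h1 : HasDerivAt (ψ 0) (ψ 1 u) u := hd 0 (by omega) u hu
      have h2 : HasDerivAt (fun s => ∑ r ∈ Finset.range (k+1), ψ r 0 * s ^ r / r.factorial)
          (∑ r ∈ Finset.range k, ψ (r+1) 0 * u ^ r / r.factorial) u := by
        have h3 : HasDerivAt (fun s => ∑ r ∈ Finset.range (k+1), ψ r 0 * s ^ r / r.factorial)
            (∑ r ∈ Finset.range (k+1), ψ r 0 * ((r:ℝ) * u ^ (r-1)) / r.factorial) u := by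
          apply HasDerivAt.fun_sum
          intro r _
          have : HasDerivAt (fun s : ℝ => s ^ r) ((r:ℝ) * u ^ (r-1)) u := hasDerivAt_pow r u
          simpa [mul_div_assoc] using (this.const_mul (ψ r 0)).div_const (r.factorial : ℝ)
        convert h3 using 1
        rw [Finset.sum_range_succ']
        simp only [Nat.factorial]
        have : ∀ r, ψ (r+1) 0 * u ^ r / r.factorial
            = ψ (r+1) 0 * (((r:ℝ)+1) * u ^ r) / ((r+1) * r.factorial : ℕ) := by
          intro r
          have hr0 : ((r:ℝ) + 1) ≠ 0 := by positivity
          have hrf : ((r.factorial : ℝ)) ≠ 0 := by exact_mod_cast r.factorial_ne_zero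
          push_cast
          field_simp
        rw [Finset.sum_congr rfl (fun r _ => this r)]
        norm_num
      simpa [hF, hG] using h1.fun_sub h2
    have hF0 : F 0 = 0 := by
      simp only [hF]
      rw [Finset.sum_range_succ']
      simp
    have hbound : ∀ u ∈ Set.Ico (0:ℝ) 1, ‖G u‖ ≤ K := by
      intro u hu
      have := hIH u ⟨hu.1, le_of_lt hu.2⟩
      simpa [hG, Real.norm_eq_abs] using this
    have := norm_image_sub_le_of_norm_deriv_le_segment'
      (f := F) (f' := G) (a := 0) (b := 1) (C := K)
      (fun u hu => (hderiv u hu).hasDerivWithinAt) hbound s hs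
    rw [hF0, sub_zero] at this
    have : |F s| ≤ K * s := by simpa [Real.norm_eq_abs] using this
    calc |F s| ≤ K * s := this
    _ ≤ K * 1 := by nlinarith [hs.2, hs.1]
    _ = K := mul_one K

end taylor1d
section derivbound
variable {n : ℕ}

lemma contDiffOn_norm_rpow (n : ℕ) (r : ℝ) :
    ContDiffOn ℝ ((⊤:ℕ∞) : WithTop ℕ∞) (fun z : EuclideanSpace ℝ (Fin n) => ‖z‖ ^ r)
      {z : EuclideanSpace ℝ (Fin n) | z ≠ 0} := by
  intro z hz
  have h1 : ContDiffAt ℝ ((⊤:ℕ∞) : WithTop ℕ∞) (fun s : ℝ => s ^ r) ‖z‖ :=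
    Real.contDiffAt_rpow_const_of_ne (norm_ne_zero_iff.2 hz)
  have h2 : ContDiffAt ℝ ((⊤:ℕ∞) : WithTop ℕ∞) (norm : EuclideanSpace ℝ (Fin n) → ℝ) z :=
    contDiffAt_norm ℝ hz
  exact (h1.comp z h2).contDiffWithinAt

lemma deriv_bound_zero (n N : ℕ) (hn : 0 < n) (r : ℝ) :
    ∃ C > 0, ∀ x : EuclideanSpace ℝ (Fin n), x ≠ 0 →
      ‖iteratedFDeriv ℝ N (fun z : EuclideanSpace ℝ (Fin n) => ‖z‖ ^ r) x‖
        ≤ C * ‖x‖ ^ (r - N) := by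
  classical
  set E := EuclideanSpace ℝ (Fin n)
  set h : E → ℝ := fun z => ‖z‖ ^ r with hh
  set U : Set E := {z | z ≠ 0} with hUdef
  have hU : IsOpen U := isOpen_ne
  have hsmooth : ContDiffOn ℝ ((⊤:ℕ∞) : WithTop ℕ∞) h U := contDiffOn_norm_rpow n r
  have hcont : ContinuousOn (iteratedFDeriv ℝ N h) U := by
    have h1 := hsmooth.continuousOn_iteratedFDerivWithin (m := N)
      (by exact_mod_cast le_top) hU.uniqueDiffOn
    exact h1.congr fun z hz => ((iteratedFDerivWithin_of_isOpen N hU) hz).symm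
  have hsub : Metric.sphere (0:E) 1 ⊆ U := by
    intro z hz
    simp only [Metric.mem_sphere, dist_zero_right] at hz
    intro h0
    rw [h0] at hz; simp at hz
  obtain ⟨C0, hC0⟩ := (isCompact_sphere (0:E) 1).exists_bound_of_continuousOn (hcont.mono hsub)
  refine ⟨max C0 1, lt_of_lt_of_le one_pos (le_max_right _ _), ?_⟩
  intro x hx
  set c : ℝ := ‖x‖ with hcdef
  have hc : 0 < c := norm_pos_iff.2 hx
  set u : E := c⁻¹ • x with hu
  have hun : ‖u‖ = 1 := by
    rw [hu, norm_smul, norm_inv, Real.norm_eq_abs, abs_of_pos hc, inv_mul_cancel₀ hc.ne']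
  have hu0 : u ≠ 0 := by rw [← norm_ne_zero_iff, hun]; norm_num
  have hxU : x ∈ U := hx
  have huU : u ∈ U := hu0
  set e : E ≃L[ℝ] E := (LinearEquiv.smulOfNeZero ℝ E c hc.ne').toContinuousLinearEquiv with he
  have heapp : ∀ z : E, e z = c • z := fun z => rfl
  have hpre : (⇑e) ⁻¹' U = U := by
    ext z
    simp only [Set.mem_preimage, hUdef, Set.mem_setOf_eq, heapp]
    simp [smul_eq_zero, hc.ne']
  have heu : e u = x := by rw [heapp, hu, smul_inv_smul₀ hc.ne']
  -- identity between iterated derivatives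
  have hcomp := ContinuousLinearEquiv.iteratedFDerivWithin_comp_right e h
    hU.uniqueDiffOn (x := u) (by rw [heu]; exact hxU) N
  have hfun : (h ∘ ⇑e) = fun z => (c ^ r) • h z := by
    funext z
    simp only [Function.comp_apply, heapp, hh, smul_eq_mul]
    rw [norm_smul, Real.norm_eq_abs, abs_of_pos hc, Real.mul_rpow hc.le (norm_nonneg z)]
  have hsm : ContDiffOn ℝ (N : WithTop ℕ∞) h U := hsmooth.of_le (by exact_mod_cast le_top)
  have hlhs : iteratedFDerivWithin ℝ N (h ∘ ⇑e) U u
      = (c ^ r) • iteratedFDerivWithin ℝ N h U u := by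
    rw [hfun]
    have : (fun z => (c ^ r) • h z) = (c ^ r) • h := rfl
    rw [this]
    exact iteratedFDerivWithin_const_smul_apply (R := ℝ) (a := c ^ r) (hsm u huU) hU.uniqueDiffOn huU
  rw [hpre] at hcomp
  rw [hlhs] at hcomp
  rw [iteratedFDerivWithin_of_isOpen N hU huU, iteratedFDerivWithin_of_isOpen N hU (by rw [heu]; exact hxU)] at hcomp
  rw [heu] at hcomp
  -- hcomp : c^r • iteratedFDeriv ℝ N h u = (iteratedFDeriv ℝ N h x).compContinuousLinearMap (fun _ => ↑e)
  set A := iteratedFDeriv ℝ N h x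
  set B := iteratedFDeriv ℝ N h u
  have hBnorm : ‖B‖ ≤ C0 := hC0 u (by simp [Metric.mem_sphere, hun])
  have hAv : ∀ v : Fin N → E, A v = (c ^ r * ((c⁻¹)^N)) * (B v) := by
    intro v
    have h1 : A v = A (fun q => e (c⁻¹ • v q)) := by
      congr 1; funext q; rw [heapp, smul_inv_smul₀ hc.ne']
    have h2 : A (fun q => e (c⁻¹ • v q))
        = (A.compContinuousLinearMap (fun _ => (e : E →L[ℝ] E))) (fun q => c⁻¹ • v q) := by
      rw [ContinuousMultilinearMap.compContinuousLinearMap_apply]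
      rfl
    rw [h1, h2, ← hcomp]
    have h3 : (fun q : Fin N => c⁻¹ • v q) = fun q => (fun _ : Fin N => c⁻¹) q • v q := rfl
    rw [ContinuousMultilinearMap.smul_apply, h3, B.map_smul_univ (fun _ => c⁻¹) v]
    simp only [smul_eq_mul, Finset.prod_const, Finset.card_univ, Fintype.card_fin]
    ring
  have hC0nn : 0 ≤ C0 := le_trans (norm_nonneg B) hBnorm
  have hcrN : 0 ≤ c ^ r * (c⁻¹)^N := by positivity
  have hA : ‖A‖ ≤ (c ^ r * (c⁻¹)^N) * C0 := by
    apply ContinuousMultilinearMap.opNorm_le_bound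
    · exact mul_nonneg hcrN hC0nn
    · intro v
      rw [hAv v, Real.norm_eq_abs, abs_mul, abs_of_nonneg hcrN]
      have hle := B.le_opNorm v
      have hBv : |B v| ≤ C0 * ∏ q, ‖v q‖ := by
        refine le_trans ?_ (mul_le_mul_of_nonneg_right hBnorm
          (Finset.prod_nonneg fun q _ => norm_nonneg _))
        simpa [Real.norm_eq_abs] using hle
      calc c ^ r * c⁻¹ ^ N * |B v| ≤ c ^ r * c⁻¹ ^ N * (C0 * ∏ q, ‖v q‖) :=
            mul_le_mul_of_nonneg_left hBv hcrN
      _ = c ^ r * c⁻¹ ^ N * C0 * ∏ q, ‖v q‖ := by ring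
  have hpow : c ^ r * (c⁻¹)^N = c ^ (r - (N:ℝ)) := by
    rw [Real.rpow_sub hc, inv_pow, ← Real.rpow_natCast c N, div_eq_mul_inv]
  calc ‖A‖ ≤ (c ^ r * (c⁻¹)^N) * C0 := hA
  _ = C0 * c ^ (r - (N:ℝ)) := by rw [hpow]; ring
  _ ≤ (max C0 1) * c ^ (r - (N:ℝ)) := by
      apply mul_le_mul_of_nonneg_right (le_max_left _ _) (by positivity)

end derivbound
section derivshift

lemma deriv_bound (n N : ℕ) (hn : 0 < n) (r : ℝ) :
    ∃ C > 0, ∀ (y x : EuclideanSpace ℝ (Fin n)), x ≠ y →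
      ‖iteratedFDeriv ℝ N (fun z => ‖z - y‖ ^ r) x‖ ≤ C * ‖x - y‖ ^ (r - N) := by
  obtain ⟨C, hC, hbound⟩ := deriv_bound_zero n N hn r
  refine ⟨C, hC, ?_⟩
  intro y x hxy
  have hfun : (fun z : EuclideanSpace ℝ (Fin n) => ‖z - y‖ ^ r)
      = fun z => (fun w : EuclideanSpace ℝ (Fin n) => ‖w‖ ^ r) (z + (-y)) := by
    funext z; rw [sub_eq_add_neg]
  rw [hfun, iteratedFDeriv_comp_add_right'' (fun w : EuclideanSpace ℝ (Fin n) => ‖w‖ ^ r) (-y) N x,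
    ← sub_eq_add_neg]
  exact hbound (x - y) (sub_ne_zero.2 hxy)

end derivshift

section taylorrem
variable {n : ℕ}

lemma taylor_remainder {f : EuclideanSpace ℝ (Fin n) → ℝ} {U : Set (EuclideanSpace ℝ (Fin n))}
    (hU : IsOpen U) (hf : ContDiffOn ℝ ((⊤:ℕ∞) : WithTop ℕ∞) f U)
    {c x : EuclideanSpace ℝ (Fin n)} (N : ℕ)
    (hseg : ∀ s ∈ Set.Icc (0:ℝ) 1, c + s • (x - c) ∈ U)
    {K : ℝ} (hK : ∀ s ∈ Set.Icc (0:ℝ) 1, ‖iteratedFDeriv ℝ N f (c + s • (x - c))‖ ≤ K) :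
    |f x - taylorPoly f c x N| ≤ K * ‖x - c‖ ^ N := by
  classical
  set v : EuclideanSpace ℝ (Fin n) := x - c with hv
  set γ : ℝ → EuclideanSpace ℝ (Fin n) := fun s => c + s • v with hγ
  set ψ : ℕ → ℝ → ℝ := fun r s => iteratedFDeriv ℝ r f (γ s) (fun _ => v) with hψ
  have hTaylor := hf.ftaylorSeriesWithin hU.uniqueDiffOn
  -- derivative chain
  have hchain : ∀ r, ∀ s ∈ Set.Icc (0:ℝ) 1, HasDerivAt (ψ r) (ψ (r+1) s) s := by
    intro r s hs
    have hmem : γ s ∈ U := hseg s hs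
    have hFD : HasFDerivAt (fun z => ftaylorSeriesWithin ℝ f U z r)
        ((ftaylorSeriesWithin ℝ f U (γ s) (r+1)).curryLeft) (γ s) :=
      (hTaylor.fderivWithin r (by exact_mod_cast lt_top_iff_ne_top.2 (by simp)) (γ s) hmem).hasFDerivAt
        (hU.mem_nhds hmem)
    have hγd : HasDerivAt γ v s := by
      have : HasDerivAt (fun s : ℝ => s • v) ((1:ℝ) • v) s := (hasDerivAt_id s).smul_const v
      simpa [hγ] using this.const_add c
    have hcomp : HasDerivAt (fun s => ftaylorSeriesWithin ℝ f U (γ s) r)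
        ((ftaylorSeriesWithin ℝ f U (γ s) (r+1)).curryLeft v) s :=
      hFD.comp_hasDerivAt s hγd
    -- apply the evaluation CLM
    have happ := (ContinuousMultilinearMap.apply ℝ (fun _ : Fin r => EuclideanSpace ℝ (Fin n)) ℝ
      (fun _ => v)).hasFDerivAt.comp_hasDerivAt s hcomp
    -- identify functions and values
    have hγcont : Continuous γ := by
      rw [hγ]; exact continuous_const.add (continuous_id.smul continuous_const)
    have hnhds : ∀ᶠ s' in nhds s, γ s' ∈ U :=
      hγcont.continuousAt.preimage_mem_nhds (hU.mem_nhds hmem)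
    have heq : (fun s' => (ContinuousMultilinearMap.apply ℝ
          (fun _ : Fin r => EuclideanSpace ℝ (Fin n)) ℝ (fun _ => v))
          (ftaylorSeriesWithin ℝ f U (γ s') r)) =ᶠ[nhds s] ψ r := by
      filter_upwards [hnhds] with s' hmem'
      simp only [ContinuousMultilinearMap.apply_apply, hψ]
      rw [show ftaylorSeriesWithin ℝ f U (γ s') r
          = iteratedFDerivWithin ℝ r f U (γ s') from rfl,
        iteratedFDerivWithin_of_isOpen r hU hmem']
    have hval : (ContinuousMultilinearMap.apply ℝ
          (fun _ : Fin r => EuclideanSpace ℝ (Fin n)) ℝ (fun _ => v))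
          ((ftaylorSeriesWithin ℝ f U (γ s) (r+1)).curryLeft v) = ψ (r+1) s := by
      simp only [ContinuousMultilinearMap.apply_apply,
        ContinuousMultilinearMap.curryLeft_apply, hψ]
      have hcons : (Fin.cons v (fun _ : Fin r => v)) = fun _ : Fin (r+1) => v := by
        funext q
        refine Fin.cases ?_ ?_ q <;> simp
      rw [hcons, show ftaylorSeriesWithin ℝ f U (γ s) (r+1)
          = iteratedFDerivWithin ℝ (r+1) f U (γ s) from rfl,
        iteratedFDerivWithin_of_isOpen (r+1) hU hmem]
    rw [hval] at happ
    exact (happ.congr_of_eventuallyEq heq.symm)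
  -- now apply the 1D Taylor estimate
  have hvnonneg : (0:ℝ) ≤ ‖v‖ ^ N := by positivity
  have hKψ : ∀ s ∈ Set.Icc (0:ℝ) 1, |ψ N s| ≤ K * ‖v‖ ^ N := by
    intro s hs
    have h1 := (iteratedFDeriv ℝ N f (γ s)).le_opNorm (fun _ => v)
    have h2 : ∏ _q : Fin N, ‖v‖ = ‖v‖ ^ N := by
      simp [Finset.prod_const]
    calc |ψ N s| = ‖(iteratedFDeriv ℝ N f (γ s)) (fun _ => v)‖ := by
          rw [hψ]; exact (Real.norm_eq_abs _).symm
    _ ≤ ‖iteratedFDeriv ℝ N f (γ s)‖ * ‖v‖ ^ N := by rw [← h2]; exact h1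
    _ ≤ K * ‖v‖ ^ N := mul_le_mul_of_nonneg_right (hK s hs) hvnonneg
  have htay := taylor1d (K * ‖v‖ ^ N) N ψ (fun r _ => hchain r) hKψ 1
    ⟨zero_le_one, le_refl 1⟩
  have hγ1 : γ 1 = x := by rw [hγ]; simp [hv]
  have hγ0 : γ 0 = c := by rw [hγ]; simp
  have hψ01 : ψ 0 1 = f x := by
    rw [hψ]; simp only [hγ1]
    exact iteratedFDeriv_zero_apply _
  have hsum : ∑ r ∈ Finset.range N, ψ r 0 * (1:ℝ) ^ r / r.factorial
      = taylorPoly f c x N := by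
    rw [taylorPoly]
    apply Finset.sum_congr rfl
    intro r _
    rw [hψ]
    simp only [hγ0, one_pow, ← hv]
    ring
  rw [hψ01, hsum] at htay
  exact htay
section pairing
variable {n : ℕ} {p : ℝ} {N : ℕ} {k0 : Fin n → ℤ} {m : ℕ} {a : (Fin n → ℤ) → ℝ}

lemma moment_monomial (ha : IsDiscreteAtom p N k0 m a) {r : ℕ} (d : Fin r → Fin n)
    (S : Finset (Fin r)) (hS : S.card ≤ N) :
    ∑ i ∈ dcube k0 m, a i * ∏ q ∈ S, ((i (d q) : ℝ)) = 0 := by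
  classical
  set β : Fin n → ℕ := fun l => (S.filter fun q => d q = l).card with hβdef
  have hβ : (∑ l, β l) = S.card :=
    (Finset.card_eq_sum_card_fiberwise (fun q _ => Finset.mem_univ (d q))).symm
  have hprod : ∀ i : Fin n → ℤ, ∏ q ∈ S, ((i (d q) : ℝ)) = ∏ l, ((i l : ℝ)) ^ β l := by
    intro i
    rw [← Finset.prod_fiberwise_of_maps_to (fun q _ => Finset.mem_univ (d q))
      (fun q => ((i (d q) : ℝ)))]
    apply Finset.prod_congr rfl
    intro l _
    rw [show ∏ q ∈ S.filter (fun q => d q = l), ((i (d q) : ℝ))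
        = ∏ q ∈ S.filter (fun q => d q = l), ((i l : ℝ)) from
      Finset.prod_congr rfl fun q hq => by rw [(Finset.mem_filter.1 hq).2]]
    rw [Finset.prod_const, hβdef]
  have h0 := ha.2.2 β (by rw [hβ]; exact hS)
  rw [← h0]
  apply Finset.sum_congr rfl
  intro i _
  rw [hprod i]; ring

lemma moment_prod (ha : IsDiscreteAtom p N k0 m a) {r : ℕ} (hr : r ≤ N) (d : Fin r → Fin n) :
    ∑ i ∈ dcube k0 m, a i * ∏ q, (((i (d q) : ℝ)) - ((k0 (d q) : ℝ))) = 0 := by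
  classical
  have hexp : ∀ i : Fin n → ℤ, ∏ q, (((i (d q) : ℝ)) - ((k0 (d q) : ℝ)))
      = ∑ T ∈ Finset.univ.powerset, (∏ q ∈ T, ((i (d q) : ℝ)))
          * ∏ q ∈ Finset.univ \ T, (-((k0 (d q) : ℝ))) := by
    intro i
    rw [show (fun q => (((i (d q) : ℝ)) - ((k0 (d q) : ℝ))))
        = (fun q => (((i (d q) : ℝ)) + (-((k0 (d q) : ℝ))))) from funext fun q => by ring]
    exact Finset.prod_add _ _ _
  calc ∑ i ∈ dcube k0 m, a i * ∏ q, (((i (d q) : ℝ)) - ((k0 (d q) : ℝ)))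
      = ∑ T ∈ Finset.univ.powerset, (∏ q ∈ Finset.univ \ T, (-((k0 (d q) : ℝ))))
          * ∑ i ∈ dcube k0 m, a i * ∏ q ∈ T, ((i (d q) : ℝ)) := by
        rw [show (fun i => a i * ∏ q, (((i (d q) : ℝ)) - ((k0 (d q) : ℝ))))
            = fun i => ∑ T ∈ Finset.univ.powerset,
              (∏ q ∈ Finset.univ \ T, (-((k0 (d q) : ℝ)))) * (a i * ∏ q ∈ T, ((i (d q) : ℝ)))
          from funext fun i => by rw [hexp i, Finset.mul_sum]; apply Finset.sum_congr rfl
                                  intro T _; ring]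
        rw [Finset.sum_comm]
        apply Finset.sum_congr rfl
        intro T _
        rw [Finset.mul_sum]
  _ = 0 := by
        apply Finset.sum_eq_zero
        intro T hT
        rw [moment_monomial ha d T (le_trans (le_trans (Finset.card_le_univ T)
          (by simp)) hr), mul_zero]

end pairing

section pairing2
variable {n : ℕ} {p : ℝ} {N : ℕ} {k0 : Fin n → ℤ} {m : ℕ} {a : (Fin n → ℤ) → ℝ}

lemma pairing_zero (ha : IsDiscreteAtom p N k0 m a) {r : ℕ} (hr : r ≤ N)
    (A : ContinuousMultilinearMap ℝ (fun _ : Fin r => EuclideanSpace ℝ (Fin n)) ℝ) :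
    ∑ i ∈ dcube k0 m, a i * A (fun _ => toE i - toE k0) = 0 := by
  classical
  have hdecomp : ∀ i : Fin n → ℤ, (toE i - toE k0 : EuclideanSpace ℝ (Fin n))
      = ∑ l : Fin n, (((i l : ℝ)) - ((k0 l : ℝ))) • (EuclideanSpace.single l (1:ℝ)) := by
    intro i
    ext l'
    rw [show (∑ l : Fin n, (((i l : ℝ)) - ((k0 l : ℝ))) • (EuclideanSpace.single l (1:ℝ))) l'
        = ∑ l : Fin n, ((((i l : ℝ)) - ((k0 l : ℝ))) • (EuclideanSpace.single l (1:ℝ))) l'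
      from by rw [WithLp.ofLp_sum]; exact Finset.sum_apply _ _ _]
    simp only [PiLp.smul_apply, EuclideanSpace.single_apply, smul_eq_mul, mul_ite, mul_one,
      mul_zero]
    rw [Finset.sum_ite_eq Finset.univ l' (fun l => ((i l : ℝ)) - ((k0 l : ℝ)))]
    simp [toE]
  have hexpand : ∀ i : Fin n → ℤ, A (fun _ => toE i - toE k0)
      = ∑ d : Fin r → Fin n, (∏ q, (((i (d q) : ℝ)) - ((k0 (d q) : ℝ))))
          * A (fun q => EuclideanSpace.single (d q) (1:ℝ)) := by
    intro i
    rw [show (fun _ : Fin r => (toE i - toE k0 : EuclideanSpace ℝ (Fin n)))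
        = fun _ : Fin r => ∑ l : Fin n, (((i l : ℝ)) - ((k0 l : ℝ)))
            • (EuclideanSpace.single l (1:ℝ)) from funext fun _ => hdecomp i]
    rw [A.map_sum]
    apply Finset.sum_congr rfl
    intro d _
    rw [A.map_smul_univ]
    simp [smul_eq_mul]
  calc ∑ i ∈ dcube k0 m, a i * A (fun _ => toE i - toE k0)
      = ∑ d : Fin r → Fin n, A (fun q => EuclideanSpace.single (d q) (1:ℝ))
          * ∑ i ∈ dcube k0 m, a i * ∏ q, (((i (d q) : ℝ)) - ((k0 (d q) : ℝ))) := by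
        rw [show (fun i => a i * A (fun _ => toE i - toE k0))
            = fun i => ∑ d : Fin r → Fin n, A (fun q => EuclideanSpace.single (d q) (1:ℝ))
                * (a i * ∏ q, (((i (d q) : ℝ)) - ((k0 (d q) : ℝ))))
          from funext fun i => by rw [hexpand i, Finset.mul_sum]; apply Finset.sum_congr rfl
                                  intro d _; ring]
        rw [Finset.sum_comm]
        apply Finset.sum_congr rfl
        intro d _
        rw [Finset.mul_sum]
  _ = 0 := by
        apply Finset.sum_eq_zero
        intro d _
        rw [moment_prod ha hr d, mul_zero]

end pairing2
section riesz

set_option maxHeartbeats 2000000 in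
lemma riesz_bound (n : ℕ) (α p : ℝ) (hα : 0 < α) (hαn : α < n) (N : ℕ) (hN1 : 1 ≤ N) :
    ∃ C > 0, ∀ (k0 : Fin n → ℤ) (m : ℕ) (a : (Fin n → ℤ) → ℝ),
      IsDiscreteAtom p (N - 1) k0 m a →
      ∀ (M : ℕ) (y : Fin n → ℤ), 4 * Nat.sqrt n * m < M → ((M:ℝ)/2 < (zinf (y - k0) : ℝ)) →
      |rieszPot α a y| ≤ C * ((dcube k0 m).card : ℝ) ^ (-(1/p)) * (2*(m:ℝ)+1)^(n+N)
        * (M:ℝ)^(α - n - N) := by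
  classical
  have hn : 0 < n := by exact_mod_cast (hα.trans hαn)
  have hsqrt1 : 1 ≤ Nat.sqrt n := Nat.sqrt_pos.2 hn
  obtain ⟨C₁, hC₁pos, hC₁⟩ := deriv_bound n N hn (α - n)
  refine ⟨C₁ * (Real.sqrt n + 1)^N * 4^(n+N), by positivity, ?_⟩
  intro k0 m a ha M y hMm hMy
  have hM1 : 1 ≤ M := by omega
  have hm4 : 4 * (m:ℝ) < M := by
    have : 4 * m ≤ 4 * Nat.sqrt n * m := by nlinarith [hsqrt1]
    have := lt_of_le_of_lt this hMm
    exact_mod_cast this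
  have hcard : ((dcube k0 m).card : ℝ) = (2*(m:ℝ)+1)^n := by
    rw [card_dcube]; push_cast; ring
  have hcardpos : (0:ℝ) < ((dcube k0 m).card : ℝ) := by
    rw [hcard]; positivity
  -- each point of the cube is ≠ y
  have hQne : ∀ i ∈ dcube k0 m, i ≠ y := by
    intro i hi hiy
    subst hiy
    have h1 : zinf (i - k0) ≤ m := mem_dcube_zinf.1 hi
    have : (zinf (i - k0) : ℝ) ≤ m := by exact_mod_cast h1
    nlinarith
  -- rewrite rieszPot as a finite sum
  set G : EuclideanSpace ℝ (Fin n) → ℝ := fun z => ‖z - toE y‖ ^ (α - (n:ℝ)) with hG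
  have hfin : rieszPot α a y = ∑ i ∈ dcube k0 m, a i * G (toE i) := by
    have h1 : rieszPot α a y
        = ∑' (i : ({i : Fin n → ℤ | i ≠ y} : Set (Fin n → ℤ))),
            (fun i => a i * znorm (i - y) ^ (α - (n:ℝ))) i := rfl
    rw [h1, tsum_subtype ({i : Fin n → ℤ | i ≠ y}) (fun i => a i * znorm (i - y) ^ (α - (n:ℝ)))]
    rw [tsum_eq_sum (s := dcube k0 m) ?_]
    · apply Finset.sum_congr rfl
      intro i hi
      rw [Set.indicator_of_mem (show i ∈ {i : Fin n → ℤ | i ≠ y} from hQne i hi)]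
      rw [znorm_eq, toE_sub]
    · intro i hi
      by_cases hiy : i ≠ y
      · rw [Set.indicator_of_mem (show i ∈ {i : Fin n → ℤ | i ≠ y} from hiy), ha.1 i hi, zero_mul]
      · exact Set.indicator_of_notMem (show i ∉ {i : Fin n → ℤ | i ≠ y} from hiy) _
  -- subtract the Taylor polynomial
  have hpair : ∑ i ∈ dcube k0 m, a i * taylorPoly G (toE k0) (toE i) N = 0 := by
    rw [show (fun i => a i * taylorPoly G (toE k0) (toE i) N)
        = fun i => ∑ r ∈ Finset.range N, (1 / r.factorial : ℝ)
            * (a i * iteratedFDeriv ℝ r G (toE k0) (fun _ => toE i - toE k0))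
      from funext fun i => by rw [taylorPoly, Finset.mul_sum]; apply Finset.sum_congr rfl
                              intro r _; ring]
    rw [Finset.sum_comm]
    apply Finset.sum_eq_zero
    intro r hr
    rw [← Finset.mul_sum, pairing_zero ha (by
      have := Finset.mem_range.1 hr; omega) (iteratedFDeriv ℝ r G (toE k0)), mul_zero]
  have hfin2 : rieszPot α a y
      = ∑ i ∈ dcube k0 m, a i * (G (toE i) - taylorPoly G (toE k0) (toE i) N) := by
    rw [hfin, ← sub_zero (∑ i ∈ dcube k0 m, a i * G (toE i)), ← hpair, ← Finset.sum_sub_distrib]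
    apply Finset.sum_congr rfl
    intro i _; ring
  -- Taylor remainder bound for each i in the cube
  set K : ℝ := C₁ * ((M:ℝ)/4) ^ (α - n - (N:ℝ)) with hK
  have hKpos : 0 < K := by
    apply mul_pos hC₁pos
    apply Real.rpow_pos_of_pos
    positivity
  have hrem : ∀ i ∈ dcube k0 m,
      |G (toE i) - taylorPoly G (toE k0) (toE i) N| ≤ K * (Real.sqrt n * m) ^ N := by
    intro i hi
    set U : Set (EuclideanSpace ℝ (Fin n)) := {z | (M:ℝ)/4 < ‖z - toE y‖} with hU
    have hUopen : IsOpen U := by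
      have : Continuous fun z : EuclideanSpace ℝ (Fin n) => ‖z - toE y‖ :=
        (continuous_id.sub continuous_const).norm
      exact isOpen_lt continuous_const this
    have hUne : ∀ z ∈ U, z ≠ toE y := by
      intro z hz hzy
      rw [hzy] at hz
      simp only [hU, Set.mem_setOf_eq, sub_self, norm_zero] at hz
      have : (0:ℝ) < (M:ℝ)/4 := by positivity
      linarith
    have hGsmooth : ContDiffOn ℝ ((⊤:ℕ∞) : WithTop ℕ∞) G U := by
      intro z hz
      have h1 : ContDiffAt ℝ ((⊤:ℕ∞) : WithTop ℕ∞)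
          (fun w : EuclideanSpace ℝ (Fin n) => ‖w‖ ^ (α - (n:ℝ))) (z - toE y) := by
        apply (contDiffOn_norm_rpow n (α - (n:ℝ))).contDiffAt
        apply IsOpen.mem_nhds isOpen_ne
        exact sub_ne_zero.2 (hUne z hz)
      have h2 : ContDiffAt ℝ ((⊤:ℕ∞) : WithTop ℕ∞)
          (fun z : EuclideanSpace ℝ (Fin n) => z - toE y) z :=
        (contDiff_id.sub contDiff_const).contDiffAt
      exact (h1.comp z h2).contDiffWithinAt
    -- the segment stays in U
    obtain ⟨l, hl⟩ := exists_coord_zinf hn (y - k0)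
    have hyk : (M:ℝ)/2 < |((y l : ℝ)) - ((k0 l : ℝ))| := by
      have h9 : ((((y - k0) l).natAbs : ℕ) : ℝ) = |(((y - k0) l : ℤ) : ℝ)| := by
        rw [Nat.cast_natAbs, Int.cast_abs]
      have h10 : (((y - k0) l : ℤ) : ℝ) = ((y l : ℝ)) - ((k0 l : ℝ)) := by
        rw [Pi.sub_apply]; push_cast; ring
      calc (M:ℝ)/2 < (zinf (y - k0) : ℝ) := hMy
      _ = |((y l : ℝ)) - ((k0 l : ℝ))| := by rw [hl, h9, h10]
    have hil : |((i l : ℝ)) - ((k0 l : ℝ))| ≤ m := by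
      have h1 := mem_dcube.1 hi l
      have h9 : (((i l - k0 l).natAbs : ℕ) : ℝ) = |((i l - k0 l : ℤ) : ℝ)| := by
        rw [Nat.cast_natAbs, Int.cast_abs]
      have h10 : ((i l - k0 l : ℤ) : ℝ) = ((i l : ℝ)) - ((k0 l : ℝ)) := by push_cast; ring
      rw [← h10, ← h9]
      exact_mod_cast h1
    have hseg : ∀ s ∈ Set.Icc (0:ℝ) 1, toE k0 + s • (toE i - toE k0) ∈ U := by
      intro s hs
      simp only [hU, Set.mem_setOf_eq]
      set ξ := toE k0 + s • (toE i - toE k0) with hξ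
      have hcoord : (ξ - toE y) l = ((k0 l : ℝ) - y l) + s * ((i l : ℝ) - k0 l) := by
        simp only [hξ, PiLp.add_apply, PiLp.sub_apply, PiLp.smul_apply, smul_eq_mul, toE]
        ring
      have h1 : |(ξ - toE y) l| ≤ ‖ξ - toE y‖ := abs_coord_le_norm _ l
      have h2 : |((y l : ℝ)) - ((k0 l : ℝ))| - |s * ((i l : ℝ) - k0 l)| ≤ |(ξ - toE y) l| := by
        rw [hcoord]
        have : ((k0 l : ℝ) - y l) + s * ((i l : ℝ) - k0 l)
            = -(((y l : ℝ) - k0 l) - s * ((i l : ℝ) - k0 l)) := by ring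
        rw [this, abs_neg]
        exact abs_sub_abs_le_abs_sub ((y l : ℝ) - k0 l) (s * ((i l : ℝ) - k0 l))
      have h3 : |s * ((i l : ℝ) - k0 l)| ≤ m := by
        rw [abs_mul, abs_of_nonneg hs.1]
        calc s * |((i l : ℝ)) - k0 l| ≤ 1 * |((i l : ℝ)) - k0 l| := by
              apply mul_le_mul_of_nonneg_right hs.2 (abs_nonneg _)
        _ ≤ m := by rw [one_mul]; exact hil
      nlinarith
    have hKseg : ∀ s ∈ Set.Icc (0:ℝ) 1,
        ‖iteratedFDeriv ℝ N G (toE k0 + s • (toE i - toE k0))‖ ≤ K := by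
      intro s hs
      have hmem := hseg s hs
      simp only [hU, Set.mem_setOf_eq] at hmem
      have hne : toE k0 + s • (toE i - toE k0) ≠ toE y := hUne _ (hseg s hs)
      calc ‖iteratedFDeriv ℝ N G (toE k0 + s • (toE i - toE k0))‖
          ≤ C₁ * ‖(toE k0 + s • (toE i - toE k0)) - toE y‖ ^ (α - n - (N:ℝ)) :=
            hC₁ (toE y) _ hne
      _ ≤ C₁ * ((M:ℝ)/4) ^ (α - n - (N:ℝ)) := by
            apply mul_le_mul_of_nonneg_left _ hC₁pos.le
            apply Real.rpow_le_rpow_of_nonpos (by positivity) hmem.le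
            have : (α:ℝ) < n := hαn
            push_cast
            nlinarith [Nat.cast_nonneg (α := ℝ) N]
    have := taylor_remainder hUopen hGsmooth N hseg hKseg
    calc |G (toE i) - taylorPoly G (toE k0) (toE i) N| ≤ K * ‖toE i - toE k0‖ ^ N := this
    _ ≤ K * (Real.sqrt n * m) ^ N := by
          apply mul_le_mul_of_nonneg_left _ hKpos.le
          exact pow_le_pow_left₀ (norm_nonneg _) (norm_toE_sub_le hi) N
  -- combine
  set A0 : ℝ := ((dcube k0 m).card : ℝ) ^ (-(1/p)) with hA0
  have hA0nn : 0 ≤ A0 := Real.rpow_nonneg hcardpos.le _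
  have hMpos : (0:ℝ) < M := by exact_mod_cast hM1
  set e : ℝ := α - n - (N:ℝ) with he
  have hMe : (0:ℝ) ≤ (M:ℝ)^e := Real.rpow_nonneg hMpos.le _
  have hsum : |rieszPot α a y| ≤ ((dcube k0 m).card : ℝ) * (A0 * (K * (Real.sqrt n * m)^N)) := by
    rw [hfin2]
    refine le_trans (Finset.abs_sum_le_sum_abs _ _) ?_
    have hstep : ∀ i ∈ dcube k0 m,
        |a i * (G (toE i) - taylorPoly G (toE k0) (toE i) N)| ≤ A0 * (K * (Real.sqrt n * m)^N) := by
      intro i hi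
      rw [abs_mul]
      apply mul_le_mul (ha.2.1 i) (hrem i hi) (abs_nonneg _) hA0nn
    calc ∑ i ∈ dcube k0 m, |a i * (G (toE i) - taylorPoly G (toE k0) (toE i) N)|
        ≤ ∑ _i ∈ dcube k0 m, A0 * (K * (Real.sqrt n * m)^N) := Finset.sum_le_sum hstep
    _ = ((dcube k0 m).card : ℝ) * (A0 * (K * (Real.sqrt n * m)^N)) := by
        rw [Finset.sum_const, nsmul_eq_mul]
  have hKle : K ≤ C₁ * 4^(n+N) * (M:ℝ)^e := by
    rw [hK]
    have hdiv : ((M:ℝ)/4)^e = (M:ℝ)^e * ((4:ℝ))^(-e) := by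
      rw [div_eq_mul_inv, Real.mul_rpow hMpos.le (by norm_num),
        Real.inv_rpow (by norm_num : (0:ℝ) ≤ 4), ← Real.rpow_neg (by norm_num : (0:ℝ) ≤ 4)]
    have h2 : (4:ℝ)^(-e) ≤ (4:ℝ)^(((n+N:ℕ)):ℝ) := by
      apply Real.rpow_le_rpow_of_exponent_le (by norm_num)
      rw [he]; push_cast; linarith
    have h3 : (4:ℝ)^(((n+N:ℕ)):ℝ) = (4:ℝ)^(n+N) := Real.rpow_natCast 4 (n+N)
    calc C₁ * ((M:ℝ)/4)^e = C₁ * ((M:ℝ)^e * ((4:ℝ))^(-e)) := by rw [hdiv]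
    _ ≤ C₁ * ((M:ℝ)^e * (4:ℝ)^(n+N)) := by
        apply mul_le_mul_of_nonneg_left _ hC₁pos.le
        apply mul_le_mul_of_nonneg_left _ hMe
        rw [← h3]; exact h2
    _ = C₁ * 4^(n+N) * (M:ℝ)^e := by ring
  have hs1 : (Real.sqrt n * m)^N ≤ (Real.sqrt n + 1)^N * (2*(m:ℝ)+1)^N := by
    rw [← mul_pow]
    apply pow_le_pow_left₀ (by positivity)
    nlinarith [Real.sqrt_nonneg (n:ℝ), Nat.cast_nonneg (α := ℝ) m]
  have hmain : ((dcube k0 m).card : ℝ) * (A0 * (K * (Real.sqrt n * m)^N))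
      ≤ C₁ * (Real.sqrt n + 1)^N * 4^(n+N) * A0 * (2*(m:ℝ)+1)^(n+N) * (M:ℝ)^e := by
    rw [hcard]
    have hx1 : (2*(m:ℝ)+1)^n * (Real.sqrt n * m)^N
        ≤ (2*(m:ℝ)+1)^n * ((Real.sqrt n + 1)^N * (2*(m:ℝ)+1)^N) :=
      mul_le_mul_of_nonneg_left hs1 (by positivity)
    have hx2 : K * ((2*(m:ℝ)+1)^n * (Real.sqrt n * m)^N)
        ≤ (C₁ * 4^(n+N) * (M:ℝ)^e) * ((2*(m:ℝ)+1)^n * ((Real.sqrt n + 1)^N * (2*(m:ℝ)+1)^N)) := by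
      apply mul_le_mul hKle hx1 (by positivity) ?_
      have h0 : 0 ≤ (M:ℝ)^e := hMe
      positivity
    calc (2*(m:ℝ)+1)^n * (A0 * (K * (Real.sqrt n * m)^N))
        = A0 * (K * ((2*(m:ℝ)+1)^n * (Real.sqrt n * m)^N)) := by ring
    _ ≤ A0 * ((C₁ * 4^(n+N) * (M:ℝ)^e) * ((2*(m:ℝ)+1)^n * ((Real.sqrt n + 1)^N * (2*(m:ℝ)+1)^N))) :=
        mul_le_mul_of_nonneg_left hx2 hA0nn
    _ = C₁ * (Real.sqrt n + 1)^N * 4^(n+N) * A0 * ((2*(m:ℝ)+1)^n * (2*(m:ℝ)+1)^N) * (M:ℝ)^e := by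
        ring
    _ = C₁ * (Real.sqrt n + 1)^N * 4^(n+N) * A0 * (2*(m:ℝ)+1)^(n+N) * (M:ℝ)^e := by
        rw [← pow_add]
  exact le_trans hsum hmain

end riesz

set_option maxHeartbeats 2000000 in
/-- Case I: for a `(p,∞,N-1)`-atom `a` supported in `Q_{k⁰,m}`, all `j` with
`|j-k⁰|_∞ > 4⌊√n⌋m` and all `1 ≤ t ≤ 2|j-k⁰|_∞`,
`|(Φ_t^d ∗ I_α a)(j)| ≤ C (#Q)^{-1/p} (2m+1)^{n+N} |j-k⁰|_∞^{α-n-N}`. -/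
theorem stmt14 (n : ℕ) (α p : ℝ) (hα : 0 < α) (hαn : α < n) (hp : 0 < p) (hp1 : p ≤ 1)
    (N : ℕ) (hN : N = ⌊(n : ℝ) * (1 / p - 1)⌋₊ + 1)
    (Φ : SchwartzMap (EuclideanSpace ℝ (Fin n)) ℝ)
    (hΦ : Function.support (⇑Φ) ⊆ Metric.ball 0 (1 / 4)) :
    ∃ C > (0 : ℝ), ∀ (k0 : Fin n → ℤ) (m : ℕ) (a : (Fin n → ℤ) → ℝ),
      IsDiscreteAtom p (N - 1) k0 m a →
      ∀ (j : Fin n → ℤ) (t : ℝ),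
        4 * Nat.sqrt n * m < zinf (j - k0) → 1 ≤ t → t ≤ 2 * (zinf (j - k0) : ℝ) →
        |dconv (phid Φ t) (rieszPot α a) j|
          ≤ C * ((dcube k0 m).card : ℝ) ^ (-(1 / p)) * (2 * m + 1 : ℝ) ^ (n + N) *
              ((zinf (j - k0) : ℝ)) ^ (α - n - N) := by
  classical
  have hn : 0 < n := by exact_mod_cast (hα.trans hαn)
  have hN1 : 1 ≤ N := by omega
  obtain ⟨CΦ, hCΦpos, hCΦ⟩ := Φ.decay 0 0
  have hCΦ' : ∀ x, |Φ x| ≤ CΦ := by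
    intro x
    have := hCΦ x
    rwa [pow_zero, one_mul, norm_iteratedFDeriv_zero, Real.norm_eq_abs] at this
  obtain ⟨CR, hCRpos, hCR⟩ := riesz_bound n α p hα hαn N hN1
  refine ⟨3^n * CΦ * CR, by positivity, ?_⟩
  intro k0 m a ha j t hMm ht1 ht2
  set M : ℕ := zinf (j - k0) with hM
  have hM1 : 1 ≤ M := by omega
  have hMpos : (0:ℝ) < M := by exact_mod_cast hM1
  have htpos : (0:ℝ) < t := lt_of_lt_of_le one_pos ht1
  have ht4 : t/4 ≤ (M:ℝ)/2 := by linarith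
  set B : ℝ := CR * ((dcube k0 m).card : ℝ) ^ (-(1/p)) * (2*(m:ℝ)+1)^(n+N) * (M:ℝ)^(α - n - N)
    with hB
  have hcardpos : (0:ℝ) < ((dcube k0 m).card : ℝ) := by
    rw [card_dcube]; positivity
  have hBnn : 0 ≤ B := by
    apply mul_nonneg
    apply mul_nonneg
    apply mul_nonneg hCRpos.le (Real.rpow_nonneg hcardpos.le _)
    · positivity
    · exact Real.rpow_nonneg hMpos.le _
  set KF : ℕ := Nat.floor (t/4) with hKF
  -- small norms force membership in the cube dcube 0 KF
  have hsupp : ∀ i : Fin n → ℤ, i ∉ dcube (0 : Fin n → ℤ) KF →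
      phid Φ t i * rieszPot α a (j - i) = 0 := by
    intro i hi
    suffices h : phid Φ t i = 0 by rw [h, zero_mul]
    rw [phid]
    by_cases hi0 : i = 0
    · simp [hi0]
    · rw [if_neg hi0]
      have hl : ∃ l, KF < (i l).natAbs := by
        by_contra hcon
        push_neg at hcon
        exact hi (mem_dcube.2 (fun l => by simpa using hcon l))
      obtain ⟨l, hl⟩ := hl
      have h2 : t/4 < ((i l).natAbs : ℝ) := by
        calc t/4 < KF + 1 := Nat.lt_floor_add_one _
        _ ≤ ((i l).natAbs : ℝ) := by exact_mod_cast hl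
      have h3 : t/4 < ‖toE i‖ := by
        apply lt_of_lt_of_le h2
        calc ((i l).natAbs : ℝ) = |((i l : ℝ))| := by
              rw [Nat.cast_natAbs, Int.cast_abs]
        _ = |toE i l| := rfl
        _ ≤ ‖toE i‖ := abs_coord_le_norm _ _
      have h4 : Φ (t⁻¹ • toE i) = 0 := by
        by_contra hne
        have hmem := hΦ (Function.mem_support.2 hne)
        rw [mem_ball_zero_iff] at hmem
        rw [norm_smul, norm_inv, Real.norm_eq_abs, abs_of_pos htpos] at hmem
        have : ‖toE i‖ < t/4 := by
          rw [inv_mul_lt_iff₀ htpos] at hmem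
          linarith
        linarith
      rw [h4, mul_zero]
  have hconv : dconv (phid Φ t) (rieszPot α a) j
      = ∑ i ∈ dcube (0 : Fin n → ℤ) KF, phid Φ t i * rieszPot α a (j - i) :=
    tsum_eq_sum hsupp
  -- per-term bound
  have hterm : ∀ i ∈ dcube (0 : Fin n → ℤ) KF,
      |phid Φ t i * rieszPot α a (j - i)| ≤ (t ^ (-(n:ℝ)) * CΦ) * B := by
    intro i _
    have htn : (0:ℝ) < t ^ (-(n:ℝ)) := Real.rpow_pos_of_pos htpos _
    by_cases h0 : phid Φ t i = 0
    · rw [h0, zero_mul, abs_zero]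
      positivity
    · have hi0 : i ≠ 0 := by
        intro hc; apply h0; rw [phid, if_pos hc]
      have hφne : Φ (t⁻¹ • toE i) ≠ 0 := by
        intro hc; apply h0; rw [phid, if_neg hi0, hc, mul_zero]
      have hmem := hΦ (Function.mem_support.2 hφne)
      rw [mem_ball_zero_iff, norm_smul, norm_inv, Real.norm_eq_abs, abs_of_pos htpos] at hmem
      have hnormi : ‖toE i‖ < t/4 := by
        rw [inv_mul_lt_iff₀ htpos] at hmem
        linarith
      have hzinfi : (zinf i : ℝ) < (M:ℝ)/2 :=
        lt_of_le_of_lt (zinf_coe_le_norm hn i) (lt_of_lt_of_le hnormi ht4)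
      have hMy : (M:ℝ)/2 < (zinf ((j - i) - k0) : ℝ) := by
        have hsplit : (j - k0) = ((j - i) - k0) + i := by ring
        have h5 : M ≤ zinf ((j - i) - k0) + zinf i := by
          rw [hM, hsplit]; exact zinf_add_le _ _
        have h5' : (M:ℝ) ≤ (zinf ((j - i) - k0) : ℝ) + (zinf i : ℝ) := by exact_mod_cast h5
        linarith
      have hriesz := hCR k0 m a ha M (j - i) hMm hMy
      have hphid : |phid Φ t i| ≤ t ^ (-(n:ℝ)) * CΦ := by
        rw [phid, if_neg hi0, abs_mul, abs_of_pos htn]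
        exact mul_le_mul_of_nonneg_left (hCΦ' _) htn.le
      rw [abs_mul]
      exact mul_le_mul hphid hriesz (abs_nonneg _) (by positivity)
  -- count the lattice points
  have hcount : ((dcube (0 : Fin n → ℤ) KF).card : ℝ) ≤ ((3/2) * t)^n := by
    rw [card_dcube]
    have h6 : (KF : ℝ) ≤ t/4 := Nat.floor_le (by positivity)
    have h7 : ((2 * KF + 1 : ℕ) : ℝ) ≤ (3/2) * t := by
      push_cast; linarith
    calc (((2 * KF + 1)^n : ℕ) : ℝ) = ((2 * KF + 1 : ℕ) : ℝ)^n := by push_cast; ring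
    _ ≤ ((3/2) * t)^n := pow_le_pow_left₀ (by positivity) h7 n
  have hkey : ((3/2) * t)^n * t ^ (-(n:ℝ)) = (3/2 : ℝ)^n := by
    rw [mul_pow, Real.rpow_neg htpos.le, Real.rpow_natCast]
    field_simp
  calc |dconv (phid Φ t) (rieszPot α a) j|
      = |∑ i ∈ dcube (0 : Fin n → ℤ) KF, phid Φ t i * rieszPot α a (j - i)| := by rw [hconv]
  _ ≤ ∑ i ∈ dcube (0 : Fin n → ℤ) KF, |phid Φ t i * rieszPot α a (j - i)| :=
      Finset.abs_sum_le_sum_abs _ _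
  _ ≤ ∑ _i ∈ dcube (0 : Fin n → ℤ) KF, (t ^ (-(n:ℝ)) * CΦ) * B := Finset.sum_le_sum hterm
  _ = ((dcube (0 : Fin n → ℤ) KF).card : ℝ) * ((t ^ (-(n:ℝ)) * CΦ) * B) := by
      rw [Finset.sum_const, nsmul_eq_mul]
  _ ≤ ((3/2) * t)^n * ((t ^ (-(n:ℝ)) * CΦ) * B) := by
      apply mul_le_mul_of_nonneg_right hcount
      have htn : (0:ℝ) < t ^ (-(n:ℝ)) := Real.rpow_pos_of_pos htpos _
      positivity
  _ = (3/2 : ℝ)^n * (CΦ * B) := by rw [← hkey]; ring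
  _ ≤ (3 : ℝ)^n * (CΦ * B) := by
      apply mul_le_mul_of_nonneg_right (pow_le_pow_left₀ (by norm_num) (by norm_num) n)
      positivity
  _ = 3^n * CΦ * CR * ((dcube k0 m).card : ℝ) ^ (-(1 / p)) * (2 * m + 1 : ℝ) ^ (n + N) *
      ((zinf (j - k0) : ℝ)) ^ (α - n - N) := by
      rw [hB, ← hM]; ring
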